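/- Let A be a C*-algebra, K a closed essential ideal of A, and S a closed semiregular operator on A (a closed densely defined A-linear operator S : D(S) → A with D(S) a dense right ideal and S* densely defined). Then S maps D(S) ∩ K into K. -/

import Mathlib

/-- A densely defined operator on a C*-algebra `A`, presented by a total function `toFun`
whose meaningful values are those on its domain `dom`.  The domain is a dense right ideal,
on which the operator is `ℂ`-linear and right `A`-linear (`S(a b) = (S a) b`). -/
structure UnboundedOp (A : Type*) [NonUnitalCStarAlgebra A] where
  dom : Set A
  toFun : A → A
  dense_dom : Dense dom
  zero_mem : (0 : A) ∈ dom
  add_mem : ∀ a ∈ dom, ∀ b ∈ dom, a + b ∈ dom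
  smul_mem : ∀ (c : ℂ), ∀ a ∈ dom, c • a ∈ dom
  mul_mem : ∀ a ∈ dom, ∀ x : A, a * x ∈ dom
  map_add' : ∀ a ∈ dom, ∀ b ∈ dom, toFun (a + b) = toFun a + toFun b
  map_smul' : ∀ (c : ℂ), ∀ a ∈ dom, toFun (c • a) = c • toFun a
  map_mul' : ∀ a ∈ dom, ∀ x : A, toFun (a * x) = toFun a * x

namespace UnboundedOp

variable {A : Type*} [NonUnitalCStarAlgebra A]

/-- The domain of the adjoint of `S`, with respect to the `A`-valued inner
product `⟨a, b⟩ = a* b` on `A`: those `a` admitting `c` with `⟨c, b⟩ = ⟨a, S b⟩`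
for all `b` in the domain of `S`. -/
def adjDom (S : UnboundedOp A) : Set A :=
  {a : A | ∃ c : A, ∀ b ∈ S.dom, star a * S.toFun b = star c * b}

/-- `S` is semiregular if (it is closable, which is automatic here, and) its
adjoint is densely defined. -/
def Semiregular (S : UnboundedOp A) : Prop := Dense S.adjDom

/-- `S` is a closed operator if its graph is closed. -/
def IsClosedOp (S : UnboundedOp A) : Prop :=
  IsClosed {p : A × A | p.1 ∈ S.dom ∧ p.2 = S.toFun p.1}

end UnboundedOp

/-- An ideal `K` of `A` is essential if it has trivial annihilator. -/
def TwoSidedIdeal.Essential {A : Type*} [NonUnitalCStarAlgebra A] (K : TwoSidedIdeal A) : Prop :=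
  ∀ a : A, (∀ k ∈ K, a * k = 0) → a = 0

open scoped NNReal

set_option maxHeartbeats 1000000 in
/-- Closed two-sided ideals in C*-algebras are hereditary in the weak sense that
`star x * x ∈ K` implies `x ∈ K`. -/
lemma mem_of_star_mul_self_mem_aux {A : Type*} [NonUnitalCStarAlgebra A]
    (K : TwoSidedIdeal A) (hKc : IsClosed (K : Set A))
    (x : A) (hyK : star x * x ∈ K) : x ∈ K := by
  set y := star x * x with hy_def
  have hy : IsSelfAdjoint y := IsSelfAdjoint.star_mul_self x
  -- the approximating functions
  set k : ℕ → ℝ → ℝ := fun n t => (n * t) / (n * t ^ 2 + 1) with hk_def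
  set f : ℕ → ℝ → ℝ := fun n t => t * k n t with hf_def
  have hden : ∀ (n : ℕ) (t : ℝ), (0:ℝ) < n * t ^ 2 + 1 := by
    intro n t; positivity
  have hkc : ∀ n : ℕ, Continuous (k n) := by
    intro n
    apply Continuous.div (by fun_prop) (by fun_prop)
    intro t; exact (hden n t).ne'
  have hfc : ∀ n : ℕ, Continuous (f n) := fun n => continuous_id.mul (hkc n)
  have hk0 : ∀ n : ℕ, k n 0 = 0 := by intro n; simp [hk_def]
  have hf0 : ∀ n : ℕ, f n 0 = 0 := by intro n; simp [hf_def, hk0 n]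
  set e : ℕ → A := fun n => cfcₙ (f n) y with he_def
  have hidc : ContinuousOn (fun t : ℝ => t) (quasispectrum ℝ y) := continuousOn_id
  -- membership of the approximants
  have heK : ∀ n, e n ∈ K := by
    intro n
    have : e n = y * cfcₙ (k n) y := by
      rw [he_def]
      simp only
      conv_lhs => rw [hf_def]
      rw [cfcₙ_mul (fun t : ℝ => t) (k n) y hidc rfl ((hkc n).continuousOn) (hk0 n),
        cfcₙ_id' ℝ y]
    rw [this]
    exact K.mul_mem_right _ _ hyK
  have he_sa : ∀ n, IsSelfAdjoint (e n) := fun n => cfcₙ_predicate _ y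
  -- the key norm estimate
  have key : ∀ n : ℕ, 1 ≤ n → ‖x - x * e n‖ ^ 2 ≤ (Real.sqrt n)⁻¹ := by
    intro n hn1
    have hFc : ContinuousOn (f n) (quasispectrum ℝ y) := (hfc n).continuousOn
    have hFidc : ContinuousOn (fun t : ℝ => f n t * t) (quasispectrum ℝ y) :=
      ((hfc n).mul continuous_id).continuousOn
    have hidFc : ContinuousOn (fun t : ℝ => t * f n t) (quasispectrum ℝ y) :=
      (continuous_id.mul (hfc n)).continuousOn
    have hsd : star (x - x * e n) * (x - x * e n)
        = y - y * e n - e n * y + e n * y * e n := by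
      rw [star_sub, star_mul, (he_sa n).star_eq]
      rw [sub_mul, mul_sub, mul_sub]
      rw [← hy_def]
      have h1 : star x * (x * e n) = y * e n := by rw [← mul_assoc, ← hy_def]
      have h2 : e n * star x * x = e n * y := by rw [mul_assoc, ← hy_def]
      have h3 : e n * star x * (x * e n) = e n * y * e n := by
        rw [mul_assoc (e n) (star x), ← mul_assoc (star x), ← hy_def, ← mul_assoc]
      rw [h1, h2, h3]
      abel
    have c1 : cfcₙ (fun t : ℝ => t * f n t) y = y * e n := by
      rw [cfcₙ_mul (fun t : ℝ => t) (f n) y hidc rfl hFc (hf0 n), cfcₙ_id' ℝ y, he_def]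
    have c2 : cfcₙ (fun t : ℝ => f n t * t) y = e n * y := by
      rw [cfcₙ_mul (f n) (fun t : ℝ => t) y hFc (hf0 n) hidc rfl, cfcₙ_id' ℝ y, he_def]
    have c3 : cfcₙ (fun t : ℝ => f n t * t * f n t) y = e n * y * e n := by
      rw [cfcₙ_mul (fun t : ℝ => f n t * t) (f n) y hFidc (by simp [hf0 n]) hFc (hf0 n), c2,
        he_def]
    have hcfc : cfcₙ (fun t : ℝ => t - t * f n t - f n t * t + f n t * t * f n t) y
        = y - y * e n - e n * y + e n * y * e n := by
      rw [cfcₙ_add (fun t : ℝ => t - t * f n t - f n t * t)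
          (fun t : ℝ => f n t * t * f n t) y
          ((hidc.sub hidFc).sub hFidc) (by simp [hf0 n])
          (hFidc.mul hFc) (by simp [hf0 n]),
        cfcₙ_sub (fun t : ℝ => t - t * f n t) (fun t : ℝ => f n t * t) y
          (hidc.sub hidFc) (by simp [hf0 n]) hFidc (by simp [hf0 n]),
        cfcₙ_sub (fun t : ℝ => t) (fun t : ℝ => t * f n t) y
          hidc rfl hidFc (by simp [hf0 n]),
        cfcₙ_id' ℝ y, c1, c2, c3]
    have hbound : ‖cfcₙ (fun t : ℝ => t - t * f n t - f n t * t + f n t * t * f n t) y‖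
        ≤ (Real.sqrt n)⁻¹ := by
      apply norm_cfcₙ_le
      intro t _
      have hdne := (hden n t).ne'
      have habs : t - t * f n t - f n t * t + f n t * t * f n t
          = t / ((n * t ^ 2 + 1) ^ 2) := by
        simp only [hf_def, hk_def]
        field_simp
        ring
      rw [habs]
      rw [Real.norm_eq_abs, abs_div, abs_of_pos (pow_pos (hden n t) 2)]
      have hn' : (0:ℝ) < n := by exact_mod_cast hn1
      have hs : Real.sqrt n > 0 := Real.sqrt_pos.mpr hn'
      rw [div_le_iff₀ (pow_pos (hden n t) 2), inv_mul_eq_div, le_div_iff₀ hs]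
      have hsq : Real.sqrt n * Real.sqrt n = n := Real.mul_self_sqrt hn'.le
      have h1 : (n : ℝ) * t ^ 2 + 1 ≥ 2 * Real.sqrt n * |t| := by
        nlinarith [sq_nonneg (Real.sqrt n * |t| - 1), sq_abs t, hsq]
      have hd1 : (1:ℝ) ≤ (n:ℝ) * t ^ 2 + 1 := by
        have := mul_nonneg (Nat.cast_nonneg n : (0:ℝ) ≤ (n:ℝ)) (sq_nonneg t)
        linarith
      have h2 : ((n:ℝ) * t ^ 2 + 1) ^ 2 ≥ (n : ℝ) * t ^ 2 + 1 := by
        nlinarith [hd1]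
      calc |t| * Real.sqrt n = Real.sqrt n * |t| := mul_comm _ _
        _ ≤ 2 * (Real.sqrt n * |t|) := by linarith [mul_nonneg hs.le (abs_nonneg t)]
        _ = 2 * Real.sqrt n * |t| := (mul_assoc 2 _ _).symm
        _ ≤ (n : ℝ) * t ^ 2 + 1 := h1
        _ ≤ ((n:ℝ) * t ^ 2 + 1) ^ 2 := h2
    calc ‖x - x * e n‖ ^ 2 = ‖star (x - x * e n) * (x - x * e n)‖ := by
          rw [CStarRing.norm_star_mul_self, sq]
      _ ≤ (Real.sqrt n)⁻¹ := by rw [hsd, ← hcfc]; exact hbound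
  -- take the limit
  have hlim : Filter.Tendsto (fun n => x * e n) Filter.atTop (nhds x) := by
    rw [← tendsto_sub_nhds_zero_iff]
    rw [tendsto_zero_iff_norm_tendsto_zero]
    have hsqrt : Filter.Tendsto (fun n : ℕ => Real.sqrt ((Real.sqrt n)⁻¹))
        Filter.atTop (nhds 0) := by
      have h1 : Filter.Tendsto (fun n : ℕ => ((n : ℝ))⁻¹) Filter.atTop (nhds 0) :=
        tendsto_inv_atTop_zero.comp tendsto_natCast_atTop_atTop
      have h2 := ((Real.continuous_sqrt.comp Real.continuous_sqrt).tendsto 0).comp h1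
      simp only [Function.comp_def, Real.sqrt_zero] at h2
      simpa [Real.sqrt_inv] using h2
    apply squeeze_zero' (Filter.Eventually.of_forall fun n => norm_nonneg _) _ hsqrt
    rw [Filter.eventually_atTop]
    refine ⟨1, fun n hn1 => ?_⟩
    have h := key n hn1
    have h0 : ‖x * e n - x‖ = ‖x - x * e n‖ := by rw [← norm_neg]; congr 1; abel
    rw [h0]
    have := Real.sqrt_le_sqrt h
    rwa [Real.sqrt_sq (norm_nonneg _)] at this
  exact hKc.mem_of_tendsto hlim (Filter.Eventually.of_forall fun n =>
    K.mul_mem_left _ _ (heK n))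

/-- A closed semiregular operator on a C*-algebra maps the part of its domain lying in a
closed essential ideal `K` into `K`. -/
theorem stmt_2 {A : Type*} [NonUnitalCStarAlgebra A]
    (K : TwoSidedIdeal A) (hKc : IsClosed (K : Set A)) (hKe : K.Essential)
    (S : UnboundedOp A) (hS : S.Semiregular) (hSc : S.IsClosedOp) :
    ∀ a ∈ S.dom, a ∈ K → S.toFun a ∈ K := by
  intro a ha haK
  have step1 : ∀ b ∈ S.adjDom, star b * S.toFun a ∈ K := by
    rintro b ⟨c, hc⟩
    rw [hc a ha]
    exact K.mul_mem_left _ _ haK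
  have step2 : ∀ b : A, star b * S.toFun a ∈ K := by
    intro b
    have hb : b ∈ closure S.adjDom := hS b
    have hcont : Continuous (fun b : A => star b * S.toFun a) :=
      continuous_star.mul continuous_const
    have := map_mem_closure hcont hb step1
    rwa [hKc.closure_eq] at this
  exact mem_of_star_mul_self_mem_aux K hKc _ (step2 (S.toFun a))
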